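/- arXiv:2410.23809 — 3 statements merged into one kernel-verified Lean document; each statement's English description precedes it below -/
import Mathlib

section
/- Let T be a non-crossing spanning tree on linearly ordered points p_1,...,p_n, let g_j be a gap and e_j = ρ_T(g_j) the shortest edge of T covering g_j. Then replacing e_j by the boundary edge {p_j,p_{j+1}} yields a non-crossing spanning tree T' = (T - e_j) + {p_j,p_{j+1}}, and every edge of T - e_j keeps its associated gap. -/
/- Non-crossing spanning trees on linearly ordered points p_0, ..., p_{n-1}.
An edge is a pair (a, b) of indices with a < b < n.
Gap k (for k + 1 < n) lies between points k and k+1. -/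

namespace NCST

attribute [local instance] Classical.propDecidable

abbrev Edge := ℕ × ℕ

/-- `e` covers `f`. -/
def covers (e f : Edge) : Prop := e.1 ≤ f.1 ∧ f.2 ≤ e.2

/-- `e` covers the gap between points `k` and `k+1`. -/
def coversGap (e : Edge) (k : ℕ) : Prop := e.1 ≤ k ∧ k + 1 ≤ e.2

/-- Two edges cross: their endpoints interleave in the linear order. -/
def crosses (e f : Edge) : Prop :=
  (e.1 < f.1 ∧ f.1 < e.2 ∧ e.2 < f.2) ∨ (f.1 < e.1 ∧ e.1 < f.2 ∧ f.2 < e.2)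

/-- The length of an edge. -/
def elen (e : Edge) : ℕ := e.2 - e.1

/-- The graph on the `n` points induced by an edge set. -/
def graphOf (n : ℕ) (E : Finset Edge) : SimpleGraph (Fin n) :=
  SimpleGraph.fromRel (fun a b => ((a : ℕ), (b : ℕ)) ∈ E)

def ValidEdges (n : ℕ) (E : Finset Edge) : Prop := ∀ e ∈ E, e.1 < e.2 ∧ e.2 < n

def NonCrossing (E : Finset Edge) : Prop := ∀ e ∈ E, ∀ f ∈ E, ¬ crosses e f

/-- `E` is the edge set of a non-crossing spanning tree on the points `0, …, n-1`. -/
def IsNCSpanningTree (n : ℕ) (E : Finset Edge) : Prop :=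
  ValidEdges n E ∧ NonCrossing E ∧ (graphOf n E).IsTree

/-- `ρ` assigns to each gap `k` (with `k + 1 < n`) a shortest edge of `E` covering it. -/
def IsRho (n : ℕ) (E : Finset Edge) (ρ : ℕ → Edge) : Prop :=
  ∀ k, k + 1 < n →
    ρ k ∈ E ∧ coversGap (ρ k) k ∧ ∀ f ∈ E, coversGap f k → elen (ρ k) ≤ elen f

/-- `ρ` is a bijection from the gaps `{0, …, n-2}` onto `E`. -/
def RhoBij (n : ℕ) (E : Finset Edge) (ρ : ℕ → Edge) : Prop :=
  (∀ k l, k + 1 < n → l + 1 < n → ρ k = ρ l → k = l) ∧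
  (∀ e ∈ E, ∃ k, k + 1 < n ∧ ρ k = e)

/-- `e` is a short edge for the gap `k`. -/
def isShort (e : Edge) (k : ℕ) : Prop := e = (k, k + 1)

/-- `e` is a near edge for the gap `k`: it covers the gap and shares exactly one
endpoint with `{k, k+1}`. -/
def isNear (e : Edge) (k : ℕ) : Prop :=
  coversGap e k ∧ ((e.1 = k ∧ e.2 ≠ k + 1) ∨ (e.1 ≠ k ∧ e.2 = k + 1))

/-- `e` is a far edge for the gap `k`: it covers the gap and shares no endpoint
with `{k, k+1}`. -/
def isFar (e : Edge) (k : ℕ) : Prop := coversGap e k ∧ e.1 ≠ k ∧ e.2 ≠ k + 1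

/-- The edges of `E` not covered by any other edge of `E`. -/
noncomputable def Uncovered (E : Finset Edge) : Finset Edge :=
  E.filter (fun e => ∀ f ∈ E, f ≠ e → ¬ covers f e)

/-- Gap `i` is a near-near gap: the paired edges differ and are both near. -/
def NearNear (n : ℕ) (ρ ρ' : ℕ → Edge) (i : ℕ) : Prop :=
  i + 1 < n ∧ ρ i ≠ ρ' i ∧ isNear (ρ i) i ∧ isNear (ρ' i) i

/-- Directed edge `g_i → g_j` of the conflict graph `H(T,T')`. -/
def conflictEdge (ρ ρ' : ℕ → Edge) (i j : ℕ) : Prop :=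
  i ≠ j ∧
  (crosses (ρ i) (ρ' j) ∨
   (covers (ρ' j) (ρ i) ∧ coversGap (ρ i) j) ∨
   (covers (ρ i) (ρ' j) ∧ coversGap (ρ' j) i))

/-- The subgraph of the directed graph `R` induced on `S` has no directed cycle. -/
def AcyclicOn (R : ℕ → ℕ → Prop) (S : Set ℕ) : Prop :=
  ∀ a, ¬ Relation.TransGen (fun x y => x ∈ S ∧ y ∈ S ∧ R x y) a a

/-- Two edges are adjacent: they share an endpoint. -/
def adjEdges (e f : Edge) : Prop :=
  e.1 = f.1 ∨ e.1 = f.2 ∨ e.2 = f.1 ∨ e.2 = f.2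


lemma shorter_covered {E : Finset Edge} {e f : Edge} {k : ℕ}
    (hNC : NonCrossing E) (he : e ∈ E) (hf : f ∈ E)
    (hek : coversGap e k) (hfk : coversGap f k)
    (hlen : elen e ≤ elen f) (hne : e ≠ f) : covers f e ∧ elen e < elen f := by
  have hcr := hNC e he f hf
  rw [Ne, Prod.ext_iff] at hne
  unfold coversGap covers elen crosses at *
  omega

lemma adj_graphOf {n : ℕ} {E : Finset Edge} {a b : ℕ} (ha : a < n) (hb : b < n)
    (hmem : (a, b) ∈ E) (hne : a ≠ b) :
    (graphOf n E).Adj ⟨a, ha⟩ ⟨b, hb⟩ := by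
  rw [graphOf, SimpleGraph.fromRel_adj]
  exact ⟨by simp [Fin.ext_iff, hne], Or.inl hmem⟩

lemma mem_graphOf_adj {n : ℕ} {E : Finset Edge} {u v : Fin n}
    (h : (graphOf n E).Adj u v) :
    ∃ p : Edge, p ∈ E ∧ ((u.val = p.1 ∧ v.val = p.2) ∨ (u.val = p.2 ∧ v.val = p.1)) := by
  rw [graphOf, SimpleGraph.fromRel_adj] at h
  rcases h.2 with h2 | h2
  · exact ⟨(u.val, v.val), h2, Or.inl ⟨rfl, rfl⟩⟩
  · exact ⟨(v.val, u.val), h2, Or.inr ⟨rfl, rfl⟩⟩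

lemma graphOf_adj_of_mem {n : ℕ} {E : Finset Edge} {u v : Fin n} {p : Edge} (hp : p ∈ E)
    (hor : (u.val = p.1 ∧ v.val = p.2) ∨ (u.val = p.2 ∧ v.val = p.1))
    (hne : u ≠ v) : (graphOf n E).Adj u v := by
  rw [graphOf, SimpleGraph.fromRel_adj]
  refine ⟨hne, ?_⟩
  rcases hor with ⟨h1, h2⟩ | ⟨h1, h2⟩
  · left; rw [show ((u : ℕ), (v : ℕ)) = p by rw [Prod.ext_iff]; exact ⟨h1, h2⟩]; exact hp
  · right; rw [show ((v : ℕ), (u : ℕ)) = p by rw [Prod.ext_iff]; exact ⟨h2, h1⟩]; exact hp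

lemma graphOf_mono {n : ℕ} {E F : Finset Edge} (h : E ⊆ F) :
    graphOf n E ≤ graphOf n F := by
  intro u v ha
  rw [graphOf, SimpleGraph.fromRel_adj] at ha ⊢
  exact ⟨ha.1, ha.2.imp (fun x => h x) (fun x => h x)⟩

lemma chain_reach_of {n : ℕ} (G : SimpleGraph (Fin n)) (P : ℕ → Prop)
    (hgap : ∀ k (hk : k + 1 < n), P k → G.Reachable ⟨k, by omega⟩ ⟨k + 1, hk⟩) :
    ∀ (d a b : ℕ) (hab : a ≤ b) (_ : b - a ≤ d) (hb : b < n)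
      (_ : ∀ k, a ≤ k → k < b → P k),
      G.Reachable ⟨a, by omega⟩ ⟨b, hb⟩ := by
  intro d
  induction d with
  | zero =>
    intro a b hab hd hb _
    have : a = b := by omega
    subst this
    exact SimpleGraph.Reachable.refl _
  | succ d ih =>
    intro a b hab hd hb hP
    rcases eq_or_lt_of_le hab with h | h
    · subst h; exact SimpleGraph.Reachable.refl _
    · have h1 : a + 1 < n := by omega
      exact (hgap a h1 (hP a le_rfl h)).trans
        (ih (a + 1) b (by omega) (by omega) hb (fun k hk1 hk2 => hP k (by omega) hk2))

/-- replacing the edge `e_j = ρ_T(g_j)` by the boundary edge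
`{p_j, p_{j+1}}` yields a non-crossing spanning tree in which every edge of
`T - e_j` keeps its associated gap. -/
theorem stmt14 (n : ℕ) (T : Finset Edge) (ρ : ℕ → Edge) (j : ℕ)
    (hT : IsNCSpanningTree n T) (hρ : IsRho n T ρ) (hbij : RhoBij n T ρ)
    (hj : j + 1 < n) :
    IsNCSpanningTree n (insert (j, j + 1) (T.erase (ρ j))) ∧
    IsRho n (insert (j, j + 1) (T.erase (ρ j))) (Function.update ρ j (j, j + 1)) ∧
    RhoBij n (insert (j, j + 1) (T.erase (ρ j))) (Function.update ρ j (j, j + 1)) := by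
  obtain ⟨hval, hNC, htree⟩ := hT
  obtain ⟨heT, hej, hemin⟩ := hρ j hj
  obtain ⟨he1, he2⟩ := hval _ heT
  set E' : Finset Edge := insert (j, j + 1) (T.erase (ρ j)) with hE'
  set ρ' : ℕ → Edge := Function.update ρ j (j, j + 1) with hρ'
  -- IsRho for the new tree
  have hrho' : IsRho n E' ρ' := by
    intro k hk
    by_cases hkj : k = j
    · subst hkj
      refine ⟨?_, ?_, ?_⟩
      · rw [hρ', Function.update_self]; exact Finset.mem_insert_self _ _
      · rw [hρ', Function.update_self]; exact ⟨le_rfl, le_rfl⟩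
      · intro f hf hfg
        rw [hρ', Function.update_self]
        simp only [coversGap] at hfg
        simp only [elen]
        omega
    · obtain ⟨h1, h2, h3⟩ := hρ k hk
      have hne : ρ k ≠ ρ j := fun h => hkj (hbij.1 k j hk hj h)
      rw [hρ', Function.update_of_ne hkj]
      refine ⟨Finset.mem_insert_of_mem (Finset.mem_erase.mpr ⟨hne, h1⟩), h2, ?_⟩
      intro f hf hfg
      rcases Finset.mem_insert.mp hf with rfl | hf'
      · exfalso; apply hkj
        simp only [coversGap] at hfg
        omega
      · exact h3 f (Finset.mem_of_mem_erase hf') hfg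
  -- RhoBij for the new tree
  have hbij' : RhoBij n E' ρ' := by
    constructor
    · intro k l hk hl hkl
      by_cases hkj : k = j <;> by_cases hlj : l = j
      · rw [hkj, hlj]
      · exfalso
        rw [hρ', hkj, Function.update_self, Function.update_of_ne hlj] at hkl
        have := (hρ l hl).2.1
        rw [← hkl] at this
        simp only [coversGap] at this
        omega
      · exfalso
        rw [hρ', hlj, Function.update_self, Function.update_of_ne hkj] at hkl
        have := (hρ k hk).2.1
        rw [hkl] at this
        simp only [coversGap] at this
        omega
      · rw [hρ', Function.update_of_ne hkj, Function.update_of_ne hlj] at hkl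
        exact hbij.1 k l hk hl hkl
    · intro f hf
      rcases Finset.mem_insert.mp hf with rfl | hf'
      · exact ⟨j, hj, by rw [hρ', Function.update_self]⟩
      · obtain ⟨k, hk, hke⟩ := hbij.2 f (Finset.mem_of_mem_erase hf')
        have hkj : k ≠ j := fun h => (Finset.mem_erase.mp hf').1 (by rw [← hke, h])
        exact ⟨k, hk, by rw [hρ', Function.update_of_ne hkj]; exact hke⟩
  refine ⟨?_, hrho', hbij'⟩
  -- Now the spanning-tree part.
  by_cases hcase : ρ j = (j, j + 1)
  · rw [hE', hcase, Finset.insert_erase (hcase ▸ heT)]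
    exact ⟨hval, hNC, htree⟩
  -- main case
  have hbnotT : (j, j + 1) ∉ T := by
    intro hb
    have h1 := hemin (j, j + 1) hb ⟨le_rfl, le_rfl⟩
    apply hcase
    rw [Prod.ext_iff]
    simp only [coversGap] at hej
    simp only [elen] at h1
    omega
  have hvalE' : ValidEdges n E' := by
    intro f hf
    rcases Finset.mem_insert.mp hf with rfl | hf'
    · exact ⟨by omega, hj⟩
    · exact hval f (Finset.mem_of_mem_erase hf')
  have hNCE' : NonCrossing E' := by
    have hb : ∀ f : Edge, ¬ crosses (j, j + 1) f ∧ ¬ crosses f (j, j + 1) := by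
      intro f; constructor <;> (simp only [crosses]; omega)
    intro f hf g hg
    rcases Finset.mem_insert.mp hf with rfl | hf' <;>
      rcases Finset.mem_insert.mp hg with rfl | hg'
    · exact (hb _).1
    · exact (hb _).1
    · exact (hb _).2
    · exact hNC f (Finset.mem_of_mem_erase hf') g (Finset.mem_of_mem_erase hg')
  -- reachability machinery
  set G0 : SimpleGraph (Fin n) := graphOf n (T.erase (ρ j)) with hG0
  set G' : SimpleGraph (Fin n) := graphOf n E' with hG'
  have key2 : ∀ N m (hm : m + 1 < n), elen (ρ m) ≤ N → elen (ρ m) < elen (ρ j) →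
      G0.Reachable ⟨m, by omega⟩ ⟨m + 1, hm⟩ := by
    intro N
    induction N with
    | zero =>
      intro m hm h0 _
      exfalso
      have := (hρ m hm).2.1
      simp only [coversGap] at this
      simp only [elen] at h0
      omega
    | succ N ih =>
      intro m hm hN hlt
      obtain ⟨hfT, hfg, hfmin⟩ := hρ m hm
      have hfne : ρ m ≠ ρ j := fun h => by rw [h] at hlt; omega
      have hmemE : ρ m ∈ T.erase (ρ j) := Finset.mem_erase.mpr ⟨hfne, hfT⟩
      obtain ⟨hf1, hf2⟩ := hval _ hfT
      have hPk : ∀ k (hk : k + 1 < n), ((ρ m).1 ≤ k ∧ k + 1 ≤ (ρ m).2 ∧ k ≠ m) →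
          G0.Reachable ⟨k, by omega⟩ ⟨k + 1, hk⟩ := by
        rintro k hk ⟨hk1, hk2, hkm⟩
        obtain ⟨hkT, hkg, hkmin⟩ := hρ k hk
        have h5 : elen (ρ k) ≤ elen (ρ m) := hkmin (ρ m) hfT ⟨hk1, hk2⟩
        have h6 : ρ k ≠ ρ m := fun h => hkm (hbij.1 k m hk hm h)
        have h7 := (shorter_covered hNC hkT hfT hkg ⟨hk1, hk2⟩ h5 h6).2
        exact ih k hk (by omega) (by omega)
      have c1 : G0.Reachable ⟨(ρ m).1, by omega⟩ ⟨m, by omega⟩ := by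
        have hg1 := hfg.1
        have hg2 := hfg.2
        exact chain_reach_of G0 _ hPk (m - (ρ m).1) (ρ m).1 m hg1 (by omega) (by omega)
          (fun k hk1 hk2 => ⟨hk1, by omega, by omega⟩)
      have c2 : G0.Reachable ⟨m + 1, by omega⟩ ⟨(ρ m).2, hf2⟩ := by
        have hg1 := hfg.1
        have hg2 := hfg.2
        exact chain_reach_of G0 _ hPk ((ρ m).2 - (m + 1)) (m + 1) (ρ m).2 hg2 (by omega) hf2
          (fun k hk1 hk2 => ⟨by omega, by omega, by omega⟩)
      have hadj : G0.Adj ⟨(ρ m).1, by omega⟩ ⟨(ρ m).2, hf2⟩ := by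
        apply adj_graphOf _ _ _ (by omega)
        rw [show ((ρ m).1, (ρ m).2) = ρ m from rfl]
        exact hmemE
      exact c1.symm.trans (hadj.reachable.trans c2.symm)
  have hgapj : ∀ k (hk : k + 1 < n), ((ρ j).1 ≤ k ∧ k + 1 ≤ (ρ j).2 ∧ k ≠ j) →
      G0.Reachable ⟨k, by omega⟩ ⟨k + 1, hk⟩ := by
    rintro k hk ⟨h1, h2, h3⟩
    obtain ⟨hkT, hkg, hkmin⟩ := hρ k hk
    have h5 : elen (ρ k) ≤ elen (ρ j) := hkmin (ρ j) heT ⟨h1, h2⟩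
    have h6 : ρ k ≠ ρ j := fun h => h3 (hbij.1 k j hk hj h)
    have h7 := (shorter_covered hNC hkT heT hkg ⟨h1, h2⟩ h5 h6).2
    exact key2 (elen (ρ k)) k hk le_rfl h7
  have hej1 := hej.1
  have hej2 := hej.2
  have R1 : G0.Reachable ⟨(ρ j).1, by omega⟩ ⟨j, by omega⟩ :=
    chain_reach_of G0 _ hgapj (j - (ρ j).1) (ρ j).1 j hej1 (by omega) (by omega)
      (fun k hk1 hk2 => ⟨hk1, by omega, by omega⟩)
  have R2 : G0.Reachable ⟨j + 1, by omega⟩ ⟨(ρ j).2, he2⟩ :=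
    chain_reach_of G0 _ hgapj ((ρ j).2 - (j + 1)) (j + 1) (ρ j).2 hej2 (by omega) he2
      (fun k hk1 hk2 => ⟨by omega, by omega, by omega⟩)
  have hG0le : G0 ≤ G' := graphOf_mono (Finset.subset_insert _ _)
  have hbadj : G'.Adj ⟨j, by omega⟩ ⟨j + 1, hj⟩ :=
    adj_graphOf _ _ (Finset.mem_insert_self _ _) (by omega)
  have Ree : G'.Reachable ⟨(ρ j).1, by omega⟩ ⟨(ρ j).2, he2⟩ :=
    (R1.mono hG0le).trans (hbadj.reachable.trans (R2.mono hG0le))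
  -- j and j+1 are not connected in T - e
  have claimC : ¬ G0.Reachable ⟨j, by omega⟩ ⟨j + 1, by omega⟩ := by
    intro hr
    have hreach : G0.Reachable ⟨(ρ j).1, by omega⟩ ⟨(ρ j).2, he2⟩ :=
      R1.trans (hr.trans R2)
    have hadjT : (graphOf n T).Adj ⟨(ρ j).1, by omega⟩ ⟨(ρ j).2, he2⟩ := by
      apply adj_graphOf _ _ _ (by omega)
      rw [show ((ρ j).1, (ρ j).2) = ρ j from rfl]
      exact heT
    have hbr := SimpleGraph.isAcyclic_iff_forall_adj_isBridge.mp htree.IsAcyclic hadjT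
    rw [SimpleGraph.isBridge_iff] at hbr
    apply hbr
    refine hreach.mono ?_
    intro u v huv
    obtain ⟨p, hp, hor⟩ := mem_graphOf_adj huv
    have hpT : p ∈ T := Finset.mem_of_mem_erase hp
    have hpne : p ≠ ρ j := (Finset.mem_erase.mp hp).1
    obtain ⟨hp1, hp2⟩ := hval p hpT
    rw [SimpleGraph.deleteEdges_adj]
    constructor
    · exact graphOf_mono (Finset.erase_subset _ _) huv
    · intro hmem
      rw [Set.mem_singleton_iff, Sym2.eq_iff] at hmem
      have hpne' : ¬(p.1 = (ρ j).1 ∧ p.2 = (ρ j).2) := by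
        rw [← Prod.ext_iff]; exact hpne
      rcases hmem with ⟨hu, hv⟩ | ⟨hu, hv⟩ <;>
      · have hu' := congrArg Fin.val hu
        have hv' := congrArg Fin.val hv
        simp only [] at hu' hv'
        rcases hor with ⟨h1, h2⟩ | ⟨h1, h2⟩ <;> omega
  -- acyclicity of the new graph
  have hacyc : G'.IsAcyclic := by
    intro v c hc
    by_cases hbmem : s((⟨j, by omega⟩ : Fin n), (⟨j + 1, hj⟩ : Fin n)) ∈ c.edges
    · have hcon := SimpleGraph.adj_and_reachable_delete_edges_iff_exists_cycle.mpr
        ⟨v, c, hc, hbmem⟩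
      apply claimC
      refine hcon.2.mono ?_
      intro u w huw
      rw [SimpleGraph.deleteEdges_adj] at huw
      obtain ⟨hadj, hnb⟩ := huw
      obtain ⟨p, hp, hor⟩ := mem_graphOf_adj hadj
      rcases Finset.mem_insert.mp hp with rfl | hpe
      · exfalso
        apply hnb
        rw [Set.mem_singleton_iff, Sym2.eq_iff]
        rcases hor with ⟨h1, h2⟩ | ⟨h1, h2⟩
        · exact Or.inl ⟨Fin.ext h1, Fin.ext h2⟩
        · exact Or.inr ⟨Fin.ext h1, Fin.ext h2⟩
      · exact graphOf_adj_of_mem hpe hor hadj.ne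
    · have hsub : ∀ q ∈ c.edges, q ∈ (graphOf n T).edgeSet := by
        intro q hq
        revert hq
        induction q using Sym2.ind with
        | _ u w =>
          intro hq
          have hadj : G'.Adj u w := SimpleGraph.Walk.adj_of_mem_edges c hq
          rw [SimpleGraph.mem_edgeSet]
          obtain ⟨p, hp, hor⟩ := mem_graphOf_adj hadj
          rcases Finset.mem_insert.mp hp with rfl | hpe
          · exfalso
            apply hbmem
            have heq : s(u, w) = s((⟨j, by omega⟩ : Fin n), (⟨j + 1, hj⟩ : Fin n)) := by
              rw [Sym2.eq_iff]
              rcases hor with ⟨h1, h2⟩ | ⟨h1, h2⟩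
              · exact Or.inl ⟨Fin.ext h1, Fin.ext h2⟩
              · exact Or.inr ⟨Fin.ext h1, Fin.ext h2⟩
            rw [← heq]
            exact hq
          · exact graphOf_adj_of_mem (Finset.mem_of_mem_erase hpe) hor hadj.ne
      exact htree.IsAcyclic (c.transfer _ hsub) (hc.transfer hsub)
  -- connectivity of the new graph
  have hconn : G'.Connected := by
    have hpre : G'.Preconnected := by
      intro u v
      obtain ⟨w⟩ := htree.isConnected.preconnected u v
      induction w with
      | nil => exact SimpleGraph.Reachable.refl _
      | @cons x y z hxy p ih =>
        refine SimpleGraph.Reachable.trans ?_ ih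
        obtain ⟨q, hq, hor⟩ := mem_graphOf_adj hxy
        by_cases hqe : q = ρ j
        · subst hqe
          rcases hor with ⟨h1, h2⟩ | ⟨h1, h2⟩
          · rw [show x = (⟨(ρ j).1, by omega⟩ : Fin n) from Fin.ext h1,
              show y = (⟨(ρ j).2, he2⟩ : Fin n) from Fin.ext h2]
            exact Ree
          · rw [show x = (⟨(ρ j).2, he2⟩ : Fin n) from Fin.ext h1,
              show y = (⟨(ρ j).1, by omega⟩ : Fin n) from Fin.ext h2]
            exact Ree.symm
        · exact (graphOf_adj_of_mem
            (Finset.mem_insert_of_mem (Finset.mem_erase.mpr ⟨hqe, hq⟩)) hor hxy.ne).reachable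
    haveI : Nonempty (Fin n) := ⟨⟨0, by omega⟩⟩
    exact ⟨hpre⟩
  exact ⟨hvalE', hNCE', ⟨hconn, hacyc⟩⟩

end NCST
end

section
/- Let T be a non-crossing spanning tree on a set P of n ≥ 3 points in convex position, circularly ordered p_1,...,p_n, and suppose {p_1,p_n} is not an edge of T. Then, with respect to the linear order p_1,...,p_n, T has at least two edges that are not covered by any other edge of T. -/
/- Non-crossing spanning trees on linearly ordered points p_0, ..., p_{n-1}.
An edge is a pair (a, b) of indices with a < b < n.
Gap k (for k + 1 < n) lies between points k and k+1. -/

namespace NCST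

attribute [local instance] Classical.propDecidable

lemma covers_antisymm {e f : Edge} (h1 : covers e f) (h2 : covers f e) : e = f := by
  obtain ⟨a, b⟩ := h1; obtain ⟨c, d⟩ := h2
  exact Prod.ext (le_antisymm a c) (le_antisymm d b)

lemma exists_uncovered_above (T : Finset Edge) :
    ∀ N f, f ∈ T → (T.filter (fun g => covers g f)).card ≤ N →
      ∃ g ∈ Uncovered T, covers g f := by
  intro N
  induction N with
  | zero =>
    intro f hf hcard
    exfalso
    have : f ∈ T.filter (fun g => covers g f) :=
      Finset.mem_filter.2 ⟨hf, ⟨le_refl _, le_refl _⟩⟩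
    have := Finset.card_pos.2 ⟨f, this⟩
    omega
  | succ N ih =>
    intro f hf hcard
    by_cases hu : f ∈ Uncovered T
    · exact ⟨f, hu, le_refl _, le_refl _⟩
    · have : ∃ g ∈ T, g ≠ f ∧ covers g f := by
        simp only [Uncovered, Finset.mem_filter, hf, true_and] at hu
        push_neg at hu
        exact hu
      obtain ⟨g, hg, hgf, hcov⟩ := this
      have hsub : (T.filter (fun h => covers h g)) ⊂ (T.filter (fun h => covers h f)) := by
        constructor
        · intro h hh
          rw [Finset.mem_filter] at hh ⊢
          exact ⟨hh.1, hh.2.1.trans hcov.1, hcov.2.trans hh.2.2⟩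
        · intro hc
          have : f ∈ T.filter (fun h => covers h g) := by
            apply hc
            exact Finset.mem_filter.2 ⟨hf, ⟨le_refl _, le_refl _⟩⟩
          rw [Finset.mem_filter] at this
          exact hgf (covers_antisymm hcov this.2)
      have : (T.filter (fun h => covers h g)).card ≤ N := by
        have := Finset.card_lt_card hsub
        omega
      obtain ⟨u, hu, hucov⟩ := ih g hg this
      exact ⟨u, hu, hucov.1.trans hcov.1, hcov.2.trans hucov.2⟩

/-- Every vertex of a connected graph on ≥ 2 vertices has a neighbor. -/
lemma exists_adj {n : ℕ} (G : SimpleGraph (Fin n)) (hc : G.Connected)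
    (v w : Fin n) (hvw : v ≠ w) : ∃ x, G.Adj v x := by
  obtain ⟨p⟩ := hc.preconnected v w
  cases p with
  | nil => exact absurd rfl hvw
  | cons h _ => exact ⟨_, h⟩

/-- if the boundary edge `{p_0, p_{n-1}}` (i.e. `p_1 p_n` in
1-indexed notation) is not an edge of the non-crossing spanning tree `T`, then
`T` has at least two edges not covered by any other edge of `T`. -/
theorem stmt15 (n : ℕ) (hn : 3 ≤ n) (T : Finset Edge)
    (hT : IsNCSpanningTree n T) (hb : (0, n - 1) ∉ T) :
    2 ≤ (Uncovered T).card := by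
  obtain ⟨hval, _, htree⟩ := hT
  have hconn := htree.isConnected
  have h0 : (0 : ℕ) < n := by omega
  have h1 : n - 1 < n := by omega
  set v0 : Fin n := ⟨0, h0⟩
  set v1 : Fin n := ⟨n - 1, h1⟩
  have hv01 : v0 ≠ v1 := by
    intro h
    have := congrArg Fin.val h
    simp [v0, v1] at this
    omega
  -- edge incident to 0
  obtain ⟨x, hx⟩ := exists_adj _ hconn v0 v1 hv01
  have hx' : ((0 : ℕ), (x : ℕ)) ∈ T := by
    simp only [graphOf, SimpleGraph.fromRel_adj] at hx
    rcases hx.2 with h | h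
    · exact h
    · exact absurd (hval _ h).1 (Nat.not_lt_zero _)
  -- edge incident to n-1
  obtain ⟨y, hy⟩ := exists_adj _ hconn v1 v0 hv01.symm
  have hy' : ((y : ℕ), (n - 1 : ℕ)) ∈ T := by
    simp only [graphOf, SimpleGraph.fromRel_adj] at hy
    rcases hy.2 with h | h
    · exfalso
      have h1' := (hval _ h).1
      have h2' := (hval _ h).2
      simp only [v1] at h1' h2'
      omega
    · exact h
  by_contra hcard
  push_neg at hcard
  -- there is at least one uncovered edge
  obtain ⟨e, he, _⟩ := exists_uncovered_above T _ _ hx' le_rfl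
  have huniq : ∀ f ∈ Uncovered T, f = e := by
    intro f hf
    by_contra hne
    have : 2 ≤ (Uncovered T).card := Finset.one_lt_card.2 ⟨f, hf, e, he, hne⟩
    omega
  -- e covers every edge of T
  have hcov : ∀ f ∈ T, covers e f := by
    intro f hf
    obtain ⟨g, hg, hgcov⟩ := exists_uncovered_above T _ _ hf le_rfl
    rwa [huniq g hg] at hgcov
  have h0e : e.1 = 0 := by
    have := (hcov _ hx').1
    omega
  have h1e : e.2 = n - 1 := by
    have hle := (hcov _ hy').2
    have heT : e ∈ T := (Finset.mem_filter.1 he).1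
    have := (hval e heT).2
    omega
  have heT : e ∈ T := (Finset.mem_filter.1 he).1
  have : e = (0, n - 1) := Prod.ext h0e h1e
  rw [this] at heT
  exact hb heT

end NCST
end

section
/- Let T, T' be non-crossing spanning trees on linearly ordered points p_1,...,p_n such that the set of pairs Π_R is empty, and let g_j be a near-near gap having no incoming edge in the conflict graph H(T,T'). Then flipping e_j = ρ_T(g_j) directly to e'_j = ρ_{T'}(g_j) is valid: (T - e_j) + e'_j is a non-crossing spanning tree in which every other edge retains its associated gap and its type (short/near/far). -/
/- Non-crossing spanning trees on linearly ordered points p_0, ..., p_{n-1}.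
An edge is a pair (a, b) of indices with a < b < n.
Gap k (for k + 1 < n) lies between points k and k+1. -/

namespace NCST

attribute [local instance] Classical.propDecidable

open SimpleGraph

/-! ### Generic graph lemmas -/

/-- transfer reachability along adjacency-wise reachability -/
lemma reach_of_adj_reach {V : Type*} {G H : SimpleGraph V}
    (h : ∀ a b : V, G.Adj a b → H.Reachable a b) {x y : V}
    (hr : G.Reachable x y) : H.Reachable x y := by
  obtain ⟨w⟩ := hr
  induction w with
  | nil => exact Reachable.refl _
  | cons h' p ih => exact (h _ _ h').trans ih

lemma exists_smaller {V : Type*} [Fintype V] {G : SimpleGraph V}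
    (hc : G.Connected) (hnac : ¬ G.IsAcyclic) :
    ∃ H : SimpleGraph V, H.Connected ∧ H.edgeSet.ncard + 1 = G.edgeSet.ncard := by
  unfold SimpleGraph.IsAcyclic at hnac
  push_neg at hnac
  obtain ⟨v, p, hp⟩ := hnac
  cases p with
  | nil => exact absurd hp (by intro h; exact h.ne_nil rfl)
  | @cons _ w _ hadj q =>
    have hεmem : s(v, w) ∈ (SimpleGraph.Walk.cons hadj q).edges := by
      simp [SimpleGraph.Walk.edges_cons]
    have hεE : s(v, w) ∈ G.edgeSet := SimpleGraph.Walk.edges_subset_edgeSet _ hεmem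
    have hreach : (G \ fromEdgeSet {s(v, w)}).Reachable v w := by
      by_contra hr
      exact (isBridge_iff_forall_cycle_notMem hεE).mp hr
        (SimpleGraph.Walk.cons hadj q) hp hεmem
    refine ⟨G \ fromEdgeSet {s(v, w)}, ?_, ?_⟩
    · have hne : Nonempty V := hc.nonempty
      refine ⟨fun x y => reach_of_adj_reach ?_ (hc.preconnected x y)⟩
      intro a b hab
      by_cases hε : s(a, b) = s(v, w)
      · rcases Sym2.eq_iff.mp hε with ⟨rfl, rfl⟩ | ⟨rfl, rfl⟩
        · exact hreach
        · exact hreach.symm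
      · exact SimpleGraph.Adj.reachable (by
          rw [sdiff_adj]
          exact ⟨hab, fun hcon => hε ((fromEdgeSet_adj _).mp hcon).1⟩)
    · have he : (G \ fromEdgeSet {s(v, w)}).edgeSet = G.edgeSet \ {s(v, w)} := by
        rw [edgeSet_sdiff, edgeSet_fromEdgeSet, edgeSet_sdiff_sdiff_isDiag]
      rw [he]
      exact Set.ncard_diff_singleton_add_one hεE (Set.toFinite _)

lemma connected_le_ncard {V : Type*} [Fintype V] :
    ∀ (m : ℕ) (G : SimpleGraph V), G.edgeSet.ncard ≤ m → G.Connected →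
      Fintype.card V ≤ G.edgeSet.ncard + 1 := by
  intro m
  induction m with
  | zero =>
    intro G hm hc
    by_cases hac : G.IsAcyclic
    · have : Fintype G.edgeSet := (Set.toFinite _).fintype
      have h1 := SimpleGraph.IsTree.card_edgeFinset ⟨hc, hac⟩
      have h2 : G.edgeSet.ncard = G.edgeFinset.card := by
        rw [Set.ncard_eq_toFinset_card']
        exact congrArg Finset.card (Set.toFinset_congr rfl)
      omega
    · obtain ⟨H, _, hcard⟩ := exists_smaller hc hac
      omega
  | succ m ih =>
    intro G hm hc
    by_cases hac : G.IsAcyclic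
    · have : Fintype G.edgeSet := (Set.toFinite _).fintype
      have h1 := SimpleGraph.IsTree.card_edgeFinset ⟨hc, hac⟩
      have h2 : G.edgeSet.ncard = G.edgeFinset.card := by
        rw [Set.ncard_eq_toFinset_card']
        exact congrArg Finset.card (Set.toFinset_congr rfl)
      omega
    · obtain ⟨H, hHc, hcard⟩ := exists_smaller hc hac
      have := ih H (by omega) hHc
      omega

lemma isTree_of_connected_ncard {V : Type*} [Fintype V] {G : SimpleGraph V}
    (hc : G.Connected) (hcard : G.edgeSet.ncard + 1 = Fintype.card V) : G.IsTree := by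
  refine ⟨hc, ?_⟩
  by_contra hac
  obtain ⟨H, hHc, hHcard⟩ := exists_smaller hc hac
  have := connected_le_ncard H.edgeSet.ncard H le_rfl hHc
  omega

/-! ### Arithmetic lemmas about edges -/

lemma crosses_comm {e f : Edge} : crosses e f ↔ crosses f e := by
  unfold crosses; tauto

lemma crosses_irrefl (e : Edge) : ¬ crosses e e := by
  unfold crosses; omega

lemma nested_of_not_crosses {e f : Edge} {k : ℕ} (he : coversGap e k)
    (hf : coversGap f k) (h : ¬ crosses e f) : covers e f ∨ covers f e := by
  simp only [coversGap, crosses, covers, not_or, not_and, not_lt] at *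
  omega

lemma covers_elen {e f : Edge} (h : covers f e) (he : e.1 ≤ e.2) :
    elen e ≤ elen f := by
  simp only [covers, elen] at *
  omega

lemma covers_elen_lt {e f : Edge} (h : covers f e) (hne : f ≠ e) (he : e.1 < e.2) :
    elen e < elen f := by
  have h' : f.1 ≠ e.1 ∨ f.2 ≠ e.2 := by
    by_contra hc
    push_neg at hc
    exact hne (Prod.ext hc.1 hc.2)
  simp only [covers, elen] at *
  omega

/-! ### graphOf lemmas -/

lemma graphOf_adj {n : ℕ} {E : Finset Edge} {f : Edge} (hf : f ∈ E)
    (h1 : f.1 < f.2) (h2 : f.2 < n) :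
    (graphOf n E).Adj ⟨f.1, by omega⟩ ⟨f.2, h2⟩ := by
  rw [graphOf, fromRel_adj]
  refine ⟨by simp [Fin.ext_iff]; omega, Or.inl ?_⟩
  simpa using hf

lemma graphOf_ncard {n : ℕ} {E : Finset Edge} (hE : ValidEdges n E) :
    (graphOf n E).edgeSet.ncard = E.card := by
  classical
  have inst : Fintype (graphOf n E).edgeSet := (Set.toFinite _).fintype
  rw [Set.ncard_eq_toFinset_card']
  refine (Finset.card_bij
    (fun f hf => s((⟨f.1, lt_trans (hE f hf).1 (hE f hf).2⟩ : Fin n),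
                   (⟨f.2, (hE f hf).2⟩ : Fin n))) ?_ ?_ ?_).symm
  · intro f hf
    rw [Set.mem_toFinset, mem_edgeSet]
    exact graphOf_adj hf (hE f hf).1 (hE f hf).2
  · intro a₁ ha₁ a₂ ha₂ h
    have h1 := (hE a₁ ha₁).1
    have h2 := (hE a₂ ha₂).1
    rcases Sym2.eq_iff.mp h with ⟨hx, hy⟩ | ⟨hx, hy⟩ <;>
      simp only [Fin.mk.injEq] at hx hy
    · exact Prod.ext hx hy
    · omega
  · intro b hb
    rw [Set.mem_toFinset] at hb
    induction b using Sym2.ind with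
    | _ u v =>
      rw [mem_edgeSet, graphOf, fromRel_adj] at hb
      obtain ⟨hne, hor | hor⟩ := hb
      · refine ⟨(u.val, v.val), hor, ?_⟩
        simp
      · refine ⟨(v.val, u.val), hor, ?_⟩
        simp [Sym2.eq_swap]

/-! ### Connectivity from the rho structure -/

lemma rho_connected {n : ℕ} {E : Finset Edge} {ρ : ℕ → Edge} (hn : 0 < n)
    (hv : ValidEdges n E) (hnc : NonCrossing E) (hρ : IsRho n E ρ)
    (hinj : ∀ k l, k + 1 < n → l + 1 < n → ρ k = ρ l → k = l) :
    (graphOf n E).Connected := by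
  set R : ℕ → ℕ → Prop := fun a b =>
    ∃ (ha : a < n) (hb : b < n), (graphOf n E).Reachable ⟨a, ha⟩ ⟨b, hb⟩ with hR
  have Rrefl : ∀ a, a < n → R a a := fun a ha => ⟨ha, ha, Reachable.refl _⟩
  have Rsymm : ∀ a b, R a b → R b a := fun a b ⟨ha, hb, h⟩ => ⟨hb, ha, h.symm⟩
  have Rtrans : ∀ a b c, R a b → R b c → R a c := by
    rintro a b c ⟨ha, hb, h1⟩ ⟨hb', hc, h2⟩
    exact ⟨ha, hc, h1.trans h2⟩
  have Radj : ∀ f ∈ E, R f.1 f.2 := by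
    intro f hf
    have hval := hv f hf
    exact ⟨by omega, hval.2, (graphOf_adj hf hval.1 hval.2).reachable⟩
  have chain : ∀ (d u : ℕ), u + d < n →
      (∀ g, u ≤ g → g < u + d → R g (g + 1)) → R u (u + d) := by
    intro d
    induction d with
    | zero => intro u h _; exact Rrefl u (by omega)
    | succ d ih =>
      intro u h hg
      have h1 : R u (u + d) := ih u (by omega) (fun g hg1 hg2 => hg g hg1 (by omega))
      have h2 : R (u + d) (u + d + 1) := hg (u + d) (by omega) (by omega)
      exact Rtrans _ _ _ h1 h2
  have gap : ∀ L k, k + 1 < n → elen (ρ k) ≤ L → R k (k + 1) := by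
    intro L
    induction L with
    | zero =>
      intro k hk hL
      exfalso
      have hc := (hρ k hk).2.1
      simp only [coversGap] at hc
      simp only [elen] at hL
      omega
    | succ L ih =>
      intro k hk hL
      obtain ⟨hmem, hcov, hmin⟩ := hρ k hk
      have hval := hv _ hmem
      obtain ⟨hc1, hc2⟩ := hcov
      by_cases hshort : (ρ k).2 = (ρ k).1 + 1
      · have h1 : (ρ k).1 = k := by omega
        have h2 : (ρ k).2 = k + 1 := by omega
        have := Radj _ hmem
        rw [h1, h2] at this
        exact this
      · have hsub : ∀ g, (ρ k).1 ≤ g → g < (ρ k).2 → g ≠ k → R g (g + 1) := by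
          intro g hg1 hg2 hgk
          have hgn : g + 1 < n := by omega
          obtain ⟨hmemg, hcovg, hming⟩ := hρ g hgn
          have hvalg := hv _ hmemg
          have hle : elen (ρ g) ≤ elen (ρ k) := hming _ hmem ⟨hg1, by omega⟩
          have hne : ρ g ≠ ρ k := fun h => hgk (hinj g k hgn hk h)
          have hcovgk : coversGap (ρ k) g := ⟨hg1, by omega⟩
          rcases nested_of_not_crosses hcovg hcovgk (hnc _ hmemg _ hmem) with hcase | hcase
          · exact absurd (covers_elen_lt hcase hne hval.1) (by omega)
          · have hlt : elen (ρ g) < elen (ρ k) := covers_elen_lt hcase hne.symm hvalg.1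
            exact ih g hgn (by omega)
        have hA : R (ρ k).1 k := by
          have e1 : (ρ k).1 + (k - (ρ k).1) = k := by omega
          have := chain (k - (ρ k).1) (ρ k).1 (by omega)
            (fun g h1 h2 => hsub g h1 (by omega) (by omega))
          rwa [e1] at this
        have hB : R (k + 1) (ρ k).2 := by
          have e1 : (k + 1) + ((ρ k).2 - (k + 1)) = (ρ k).2 := by omega
          have := chain ((ρ k).2 - (k + 1)) (k + 1) (by omega)
            (fun g h1 h2 => hsub g (by omega) (by omega) (by omega))
          rwa [e1] at this
        exact Rtrans _ _ _ (Rtrans _ _ _ (Rsymm _ _ hA) (Radj _ hmem)) (Rsymm _ _ hB)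
  have hreach0 : ∀ v : Fin n, R 0 v.val := by
    intro v
    have e1 : 0 + v.val = v.val := by omega
    have := chain v.val 0 (by omega)
      (fun g hg1 hg2 => gap (elen (ρ g)) g (by omega) le_rfl)
    rwa [e1] at this
  have hne : Nonempty (Fin n) := ⟨⟨0, hn⟩⟩
  refine ⟨fun x y => ?_⟩
  obtain ⟨ha, hb, hx⟩ := hreach0 x
  obtain ⟨ha', hb', hy⟩ := hreach0 y
  exact (hx.symm.trans hy : (graphOf n E).Reachable ⟨x.val, hb⟩ ⟨y.val, hb'⟩)

/-- if the set of pairs `Π_R` is empty (every gap is either a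
common-edge gap or a near-near gap) and the near-near gap `g_j` has no incoming
edge in the conflict graph `H(T,T')`, then the direct flip `e_j → e'_j` is
valid: it yields a non-crossing spanning tree in which every other edge keeps
its associated gap (and hence its type). -/
theorem stmt19 (n : ℕ) (T T' : Finset Edge) (ρ ρ' : ℕ → Edge) (j : ℕ)
    (hT : IsNCSpanningTree n T) (hT' : IsNCSpanningTree n T')
    (hρ : IsRho n T ρ) (hbij : RhoBij n T ρ)
    (hρ' : IsRho n T' ρ') (hbij' : RhoBij n T' ρ')
    (hR : ∀ k, k + 1 < n → ρ k = ρ' k ∨ NearNear n ρ ρ' k)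
    (hj : NearNear n ρ ρ' j)
    (hin : ∀ i, i ≠ j → NearNear n ρ ρ' i → ¬ conflictEdge ρ ρ' i j) :
    IsNCSpanningTree n (insert (ρ' j) (T.erase (ρ j))) ∧
    IsRho n (insert (ρ' j) (T.erase (ρ j))) (Function.update ρ j (ρ' j)) ∧
    RhoBij n (insert (ρ' j) (T.erase (ρ j))) (Function.update ρ j (ρ' j)) := by
  classical
  obtain ⟨hjn, hne, hnearE, hnearE'⟩ := hj
  obtain ⟨hTval, hTnc, hTtree⟩ := hT
  obtain ⟨hT'val, hT'nc, hT'tree⟩ := hT'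
  obtain ⟨heT, hcovE, hminE⟩ := hρ j hjn
  obtain ⟨heT', hcovE', hminE'⟩ := hρ' j hjn
  have hvalE := hTval _ heT
  have hvalE' := hT'val _ heT'
  -- Fact A : ρ' j ∉ T
  have factA : ρ' j ∉ T := by
    intro hmem
    obtain ⟨i, hiN, hie⟩ := hbij.2 _ hmem
    have hij : i ≠ j := by
      rintro rfl
      exact hne hie
    rcases hR i hiN with hc | hnn
    · exact hij (hbij'.1 i j hiN hjn (by rw [← hc, hie]))
    · exact hin i hij hnn
        ⟨hij, Or.inr (Or.inl ⟨by rw [hie]; exact ⟨le_refl _, le_refl _⟩,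
          by rw [hie]; exact hcovE'⟩)⟩
  -- Fact F1 : no edge of T - e crosses e'
  have factF1 : ∀ f ∈ T, f ≠ ρ j → ¬ crosses f (ρ' j) := by
    intro f hf hfe
    obtain ⟨i, hiN, rfl⟩ := hbij.2 f hf
    have hij : i ≠ j := by rintro rfl; exact hfe rfl
    rcases hR i hiN with hc | hnn
    · have hmem' : ρ i ∈ T' := by rw [hc]; exact (hρ' i hiN).1
      exact hT'nc _ hmem' _ heT'
    · exact fun hcr => hin i hij hnn ⟨hij, Or.inl hcr⟩
  -- Fact F3 : every other T-edge covering gap j covers e'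
  have factF3 : ∀ f ∈ T, f ≠ ρ j → coversGap f j → covers f (ρ' j) := by
    intro f hf hfe hfc
    rcases nested_of_not_crosses hfc hcovE' (factF1 f hf hfe) with h | h
    · exact h
    · exfalso
      obtain ⟨i, hiN, rfl⟩ := hbij.2 f hf
      have hij : i ≠ j := by rintro rfl; exact hfe rfl
      rcases hR i hiN with hc | hnn
      · have hfT' : ρ i ∈ T' := by rw [hc]; exact (hρ' i hiN).1
        have hne2 : ρ' j ≠ ρ i := fun hh => factA (hh ▸ hf)
        have h1 : elen (ρ i) < elen (ρ' j) :=
          covers_elen_lt h hne2 (hTval _ hf).1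
        have h2 : elen (ρ' j) ≤ elen (ρ i) := hminE' _ hfT' hfc
        omega
      · exact hin i hij hnn ⟨hij, Or.inr (Or.inl ⟨h, hfc⟩)⟩
  -- Fact Min : if e' covers gap k (k ≠ j) then ρ k is no longer than e'
  have factMin : ∀ k, k + 1 < n → k ≠ j → coversGap (ρ' j) k →
      elen (ρ k) ≤ elen (ρ' j) := by
    intro k hkN hkj hcov
    rcases hR k hkN with hc | hnn
    · rw [hc]; exact (hρ' k hkN).2.2 _ heT' hcov
    · have hncr : ¬ crosses (ρ k) (ρ' j) := fun hcr => hin k hkj hnn ⟨hkj, Or.inl hcr⟩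
      rcases nested_of_not_crosses ((hρ k hkN).2.1) hcov hncr with h | h
      · exact absurd ⟨hkj, Or.inr (Or.inr ⟨h, hcov⟩)⟩ (hin k hkj hnn)
      · exact covers_elen h (hTval _ (hρ k hkN).1).1.le
  -- the new edge set
  set E2 : Finset Edge := insert (ρ' j) (T.erase (ρ j)) with hE2
  -- validity
  have hval2 : ValidEdges n E2 := by
    intro f hf
    rcases Finset.mem_insert.mp hf with rfl | hf'
    · exact hvalE'
    · exact hTval _ (Finset.mem_of_mem_erase hf')
  -- non-crossing
  have hnc2 : NonCrossing E2 := by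
    intro f hf g hg
    rcases Finset.mem_insert.mp hf with rfl | hf' <;>
      rcases Finset.mem_insert.mp hg with rfl | hg'
    · exact crosses_irrefl _
    · exact fun h => factF1 g (Finset.mem_of_mem_erase hg') (Finset.ne_of_mem_erase hg')
        (crosses_comm.mp h)
    · exact factF1 f (Finset.mem_of_mem_erase hf') (Finset.ne_of_mem_erase hf')
    · exact hTnc _ (Finset.mem_of_mem_erase hf') _ (Finset.mem_of_mem_erase hg')
  -- the new rho
  have hrho2 : IsRho n E2 (Function.update ρ j (ρ' j)) := by
    intro k hkN
    by_cases hkj : k = j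
    · subst hkj
      rw [Function.update_self]
      refine ⟨Finset.mem_insert_self _ _, hcovE', ?_⟩
      intro f hf hcov
      rcases Finset.mem_insert.mp hf with rfl | hf'
      · exact le_refl _
      · exact covers_elen
          (factF3 f (Finset.mem_of_mem_erase hf') (Finset.ne_of_mem_erase hf') hcov)
          hvalE'.1.le
    · rw [Function.update_of_ne hkj]
      have hmemk : ρ k ∈ E2 := by
        refine Finset.mem_insert_of_mem (Finset.mem_erase.mpr ⟨?_, (hρ k hkN).1⟩)
        exact fun h => hkj (hbij.1 k j hkN hjn h)
      refine ⟨hmemk, (hρ k hkN).2.1, ?_⟩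
      intro f hf hcov
      rcases Finset.mem_insert.mp hf with rfl | hf'
      · exact factMin k hkN hkj hcov
      · exact (hρ k hkN).2.2 f (Finset.mem_of_mem_erase hf') hcov
  -- the new rho is a bijection
  have hbij2 : RhoBij n E2 (Function.update ρ j (ρ' j)) := by
    constructor
    · intro k l hk hl heq
      by_cases hkj : k = j <;> by_cases hlj : l = j
      · rw [hkj, hlj]
      · exfalso
        rw [hkj, Function.update_self, Function.update_of_ne hlj] at heq
        exact factA (heq ▸ (hρ l hl).1)
      · exfalso
        rw [hlj, Function.update_self, Function.update_of_ne hkj] at heq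
        exact factA (heq ▸ (hρ k hk).1)
      · rw [Function.update_of_ne hkj, Function.update_of_ne hlj] at heq
        exact hbij.1 k l hk hl heq
    · intro f hf
      rcases Finset.mem_insert.mp hf with rfl | hf'
      · exact ⟨j, hjn, Function.update_self _ _ _⟩
      · obtain ⟨k, hk, hkf⟩ := hbij.2 f (Finset.mem_of_mem_erase hf')
        have hkj : k ≠ j := by
          rintro rfl
          exact Finset.ne_of_mem_erase hf' hkf.symm
        exact ⟨k, hk, by rw [Function.update_of_ne hkj, hkf]⟩
  -- cardinality
  have hfin : Fintype (graphOf n T).edgeSet := (Set.toFinite _).fintype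
  have hTcard : T.card + 1 = n := by
    have h1 := hTtree.card_edgeFinset
    have h2 : (graphOf n T).edgeSet.ncard = (graphOf n T).edgeFinset.card := by
      rw [Set.ncard_eq_toFinset_card']
      exact congrArg Finset.card (Set.toFinset_congr rfl)
    have h3 := graphOf_ncard hTval
    simp only [Fintype.card_fin] at h1
    omega
  have hE2card : E2.card = T.card := by
    rw [hE2, Finset.card_insert_of_notMem
      (fun h => factA (Finset.mem_of_mem_erase h)), Finset.card_erase_of_mem heT]
    omega
  -- tree
  have hconn : (graphOf n E2).Connected :=
    rho_connected (by omega) hval2 hnc2 hrho2 hbij2.1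
  have htree : (graphOf n E2).IsTree := by
    refine isTree_of_connected_ncard hconn ?_
    rw [graphOf_ncard hval2, Fintype.card_fin]
    omega
  exact ⟨⟨hval2, hnc2, htree⟩, hrho2, hbij2⟩


end NCST
end
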